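/- arXiv:2012.12444 — 2 statements merged into one kernel-verified Lean document; each statement's English description precedes it below -/
import Mathlib

section
/- Let A ∈ SL₂(ℝ) act on the upper half-plane ℍ by Möbius transformations. Then the hyperbolic distance from i to A·i satisfies d_ℍ(i, A·i) = 2 log ν(‖A‖), where ν(a) = √((a² + √(a⁴ − 4))/2) and ‖A‖ is the Frobenius norm of A. -/
open UpperHalfPlane

/-- The Frobenius norm of a real 2×2 matrix: `‖A‖ = √(tr(AᵀA))`. -/
noncomputable def frobNorm (A : Matrix (Fin 2) (Fin 2) ℝ) : ℝ :=
  Real.sqrt (Matrix.trace (A.transpose * A))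

/-- The function `ν(a) = √((a² + √(a⁴ − 4))/2)`. -/
noncomputable def nu (a : ℝ) : ℝ := Real.sqrt ((a ^ 2 + Real.sqrt (a ^ 4 - 4)) / 2)


private lemma dist_sq_aux (a b c d S N2 : ℝ) (hS : S = c ^ 2 + d ^ 2)
    (hN2 : N2 = a ^ 2 + b ^ 2 + c ^ 2 + d ^ 2) (hSpos : 0 < S)
    (key : (a * c + b * d) ^ 2 = (a ^ 2 + b ^ 2) * S - 1) :
    (0 - (a * c + b * d) / S) * (0 - (a * c + b * d) / S) +
      (1 - 1 / S) * (1 - 1 / S) = (N2 - 2) / S := by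
  have hne : S ≠ 0 := ne_of_gt hSpos
  subst hS hN2
  field_simp
  linear_combination key

/-- For `A ∈ SL₂(ℝ)` with `A·i ≠ i`, the hyperbolic distance from `i` to `A·i` is
`2 log ν(‖A‖)`, where `‖A‖` is the Frobenius norm of `A`. -/
theorem dist_I_smul_I (A : Matrix.SpecialLinearGroup (Fin 2) ℝ)
    (hA : A • UpperHalfPlane.I ≠ UpperHalfPlane.I) :
    dist UpperHalfPlane.I (A • UpperHalfPlane.I) = 2 * Real.log (nu (frobNorm A.1)) := by
  set a : ℝ := A.1 0 0 with ha
  set b : ℝ := A.1 0 1 with hb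
  set c : ℝ := A.1 1 0 with hc
  set d : ℝ := A.1 1 1 with hd
  have hdet : a * d - b * c = 1 := by
    have := A.2
    rwa [Matrix.det_fin_two] at this
  set S : ℝ := c ^ 2 + d ^ 2 with hS
  have hSpos : 0 < S := by
    rcases lt_or_eq_of_le (by positivity : (0:ℝ) ≤ S) with h | h
    · exact h
    · exfalso
      have hc0 : c = 0 := by nlinarith [sq_nonneg c, sq_nonneg d]
      have hd0 : d = 0 := by nlinarith [sq_nonneg c, sq_nonneg d]
      rw [hc0, hd0] at hdet; norm_num at hdet
  set w : ℍ := A • UpperHalfPlane.I with hw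
  have hcoe : (w : ℂ) = ((a : ℂ) * Complex.I + b) / ((c : ℂ) * Complex.I + d) := by
    rw [hw, UpperHalfPlane.specialLinearGroup_apply]
    simp [UpperHalfPlane.coe_I]
    rfl
  have hden : ((c : ℂ) * Complex.I + d) ≠ 0 := by
    intro h
    have him : c = 0 := by simpa using congrArg Complex.im h
    have hre : d = 0 := by simpa [him] using congrArg Complex.re h
    rw [him, hre] at hdet; norm_num at hdet
  have hSne : ((S : ℝ) : ℂ) ≠ 0 := by
    exact_mod_cast ne_of_gt hSpos
  have hdetC : (a : ℂ) * d - b * c = 1 := by exact_mod_cast congrArg (Complex.ofReal) hdet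
  have hwval : (w : ℂ) = (((a * c + b * d : ℝ) : ℂ) + Complex.I) / ((S : ℝ) : ℂ) := by
    rw [hcoe, div_eq_div_iff hden hSne, hS]
    push_cast
    linear_combination ((d : ℂ) * Complex.I - (c : ℂ)) * hdetC - (c : ℂ) * Complex.I_sq
  have hwre : (w : ℂ).re = (a * c + b * d) / S := by
    rw [hwval]; simp
  have hwim : (w : ℂ).im = 1 / S := by
    rw [hwval]; simp
  set N2 : ℝ := a ^ 2 + b ^ 2 + c ^ 2 + d ^ 2 with hN2
  have hN2ge : 2 ≤ N2 := by nlinarith [sq_nonneg (a - d), sq_nonneg (b + c)]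
  have htr : Matrix.trace (A.1.transpose * A.1) = N2 := by
    simp [Matrix.trace_fin_two, Matrix.mul_apply, Fin.sum_univ_two, Matrix.transpose_apply,
      ← ha, ← hb, ← hc, ← hd, hN2]
    ring
  have hfrob : frobNorm A.1 ^ 2 = N2 := by
    rw [frobNorm, htr, Real.sq_sqrt (by nlinarith)]
  have key : (a * c + b * d) ^ 2 = (a ^ 2 + b ^ 2) * S - 1 := by nlinarith [hdet]
  have hcosh : Real.cosh (dist UpperHalfPlane.I w) = N2 / 2 := by
    rw [UpperHalfPlane.cosh_dist]
    have hd2 : dist ((UpperHalfPlane.I : ℍ) : ℂ) (w : ℂ) ^ 2 = (N2 - 2) / S := by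
      rw [Complex.dist_eq, Complex.sq_norm, Complex.normSq_apply, Complex.sub_re, Complex.sub_im,
        hwre, hwim]
      have h1 : ((UpperHalfPlane.I : ℍ) : ℂ).re = 0 := by
        rw [UpperHalfPlane.coe_I]; simp
      have h2 : ((UpperHalfPlane.I : ℍ) : ℂ).im = 1 := by
        rw [UpperHalfPlane.coe_I]; simp
      rw [h1, h2]
      exact dist_sq_aux a b c d S N2 hS hN2 hSpos key
    rw [hd2, UpperHalfPlane.I_im, ← UpperHalfPlane.coe_im, hwim]
    have hne : S ≠ 0 := ne_of_gt hSpos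
    field_simp
    ring
  set s : ℝ := Real.sqrt (N2 ^ 2 - 4) with hs
  have hs0 : 0 ≤ s := Real.sqrt_nonneg _
  have hssq : s ^ 2 = N2 ^ 2 - 4 := Real.sq_sqrt (by nlinarith)
  have h4 : frobNorm A.1 ^ 4 = N2 ^ 2 := by
    rw [show (4:ℕ) = 2 * 2 from rfl, pow_mul, hfrob]
  have harg : 0 ≤ (N2 + s) / 2 := by linarith
  have hnuval : nu (frobNorm A.1) = Real.sqrt ((N2 + s) / 2) := by
    rw [nu, hfrob, h4, ← hs]
  have hnu2 : nu (frobNorm A.1) ^ 2 = (N2 + s) / 2 := by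
    rw [hnuval, Real.sq_sqrt harg]
  have hnu1 : 1 ≤ nu (frobNorm A.1) := by
    rw [hnuval, show (1:ℝ) = Real.sqrt 1 by simp]
    exact Real.sqrt_le_sqrt (by linarith)
  have hnupos : 0 < nu (frobNorm A.1) := lt_of_lt_of_le one_pos hnu1
  have hcosh2 : Real.cosh (2 * Real.log (nu (frobNorm A.1))) = N2 / 2 := by
    rw [Real.cosh_eq]
    have e1 : Real.exp (2 * Real.log (nu (frobNorm A.1))) = nu (frobNorm A.1) ^ 2 := by
      rw [mul_comm, Real.exp_mul, Real.exp_log hnupos]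
      norm_num
    have e2 : Real.exp (-(2 * Real.log (nu (frobNorm A.1)))) = (nu (frobNorm A.1) ^ 2)⁻¹ := by
      rw [Real.exp_neg, e1]
    rw [e1, e2, hnu2]
    have hprod : (N2 + s) / 2 * ((N2 - s) / 2) = 1 := by linear_combination -hssq / 4
    have hne : (N2 + s) / 2 ≠ 0 := ne_of_gt (by linarith)
    have hinv : ((N2 + s) / 2)⁻¹ = (N2 - s) / 2 :=
      inv_eq_of_mul_eq_one_right hprod
    rw [hinv]; ring
  have h1 : (0:ℝ) ≤ dist UpperHalfPlane.I w := dist_nonneg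
  have h2 : (0:ℝ) ≤ 2 * Real.log (nu (frobNorm A.1)) := by
    have := Real.log_nonneg hnu1
    linarith
  exact Real.cosh_strictMonoOn.injOn h1 h2 (by rw [hcosh, hcosh2])
end

section
/- Let A ∈ SL₂(ℝ) with A·i ≠ i, and let H_i(A) = {z ∈ ℍ : d_ℍ(z, i) ≤ d_ℍ(z, A·i)} be the closed half-plane of points at least as close to i as to A·i. Then the open hyperbolic ball of center i and radius log ν(‖A‖) is contained in H_i(A), where ν(a) = √((a² + √(a⁴ − 4))/2). -/
open UpperHalfPlane

lemma cosh_dist_I_smul (A : Matrix.SpecialLinearGroup (Fin 2) ℝ) :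
    Real.cosh (dist UpperHalfPlane.I (A • UpperHalfPlane.I)) =
      (A 0 0 ^ 2 + A 0 1 ^ 2 + A 1 0 ^ 2 + A 1 1 ^ 2) / 2 := by
  have hdet : A 0 0 * A 1 1 - A 0 1 * A 1 0 = 1 := by
    have := A.2
    rwa [Matrix.det_fin_two] at this
  have hS : 0 < A 1 0 ^ 2 + A 1 1 ^ 2 := by
    nlinarith [sq_nonneg (A 0 0 * A 1 0 + A 0 1 * A 1 1), sq_nonneg (A 0 0), sq_nonneg (A 0 1),
      sq_nonneg (A 1 0), sq_nonneg (A 1 1)]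
  have hSne : ((A 1 0 ^ 2 + A 1 1 ^ 2 : ℝ) : ℂ) ≠ 0 := by exact_mod_cast hS.ne'
  have hden : ((A 1 0 : ℂ) * Complex.I + (A 1 1 : ℂ)) ≠ 0 := by
    intro h
    have h1 : (A 1 1 : ℝ) = 0 := by simpa using congrArg Complex.re h
    have h2 : (A 1 0 : ℝ) = 0 := by simpa using congrArg Complex.im h
    rw [h1, h2] at hS; norm_num at hS
  have hdetC : (A 0 0 : ℂ) * A 1 1 - A 0 1 * A 1 0 = 1 := by exact_mod_cast hdet
  have hw : ((A • UpperHalfPlane.I : ℍ) : ℂ) =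
      (↑(A 0 0 * A 1 0 + A 0 1 * A 1 1) + Complex.I) / ↑(A 1 0 ^ 2 + A 1 1 ^ 2) := by
    rw [specialLinearGroup_apply]
    simp only [UpperHalfPlane.coe_mk, UpperHalfPlane.coe_I, Algebra.algebraMap_self,
      RingHom.id_apply]
    rw [div_eq_div_iff hden hSne]
    push_cast
    linear_combination ((A 1 1 : ℂ) * Complex.I - (A 1 0 : ℂ)) * hdetC -
      (A 1 0 : ℂ) * Complex.I_sq
  have him : (A • UpperHalfPlane.I : ℍ).im = 1 / (A 1 0 ^ 2 + A 1 1 ^ 2) := by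
    rw [← UpperHalfPlane.coe_im, hw, Complex.div_im]
    simp only [Complex.ofReal_re, Complex.ofReal_im, Complex.add_im, Complex.add_re,
      Complex.I_im, Complex.I_re, Complex.normSq_ofReal]
    field_simp
    ring
  have h2 : Complex.I - ((↑(A 0 0 * A 1 0 + A 0 1 * A 1 1) : ℂ) + Complex.I) /
        ↑(A 1 0 ^ 2 + A 1 1 ^ 2) =
      ((-(A 0 0 * A 1 0 + A 0 1 * A 1 1) : ℝ) + ((A 1 0 ^ 2 + A 1 1 ^ 2 - 1 : ℝ) : ℂ) * Complex.I) /
        ((A 1 0 ^ 2 + A 1 1 ^ 2 : ℝ) : ℂ) := by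
    rw [eq_div_iff hSne, sub_mul, div_mul_cancel₀ _ hSne]
    push_cast
    ring
  have hfin : 2 * (A 1 0 ^ 2 + A 1 1 ^ 2) + (A 0 0 * A 1 0 + A 0 1 * A 1 1) ^ 2 +
      (A 1 0 ^ 2 + A 1 1 ^ 2 - 1) ^ 2 =
      (A 0 0 ^ 2 + A 0 1 ^ 2 + A 1 0 ^ 2 + A 1 1 ^ 2) * (A 1 0 ^ 2 + A 1 1 ^ 2) := by
    linear_combination (-(A 0 0 * A 1 1 - A 0 1 * A 1 0) - 1) * hdet
  rw [UpperHalfPlane.cosh_dist, him, UpperHalfPlane.I_im, UpperHalfPlane.coe_I, hw,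
    Complex.dist_eq, Complex.sq_norm, h2, map_div₀, Complex.normSq_add_mul_I,
    Complex.normSq_ofReal]
  field_simp
  linear_combination hfin

/-- For `A ∈ SL₂(ℝ)` with `A·i ≠ i`, the open hyperbolic ball of center `i` and radius
`log ν(‖A‖)` is contained in the half-plane
`H_i(A) = {z ∈ ℍ : d(z,i) ≤ d(z, A·i)}`. -/
theorem ball_subset_halfPlane (A : Matrix.SpecialLinearGroup (Fin 2) ℝ)
    (hA : A • UpperHalfPlane.I ≠ UpperHalfPlane.I) :
    Metric.ball UpperHalfPlane.I (Real.log (nu (frobNorm A.1))) ⊆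
      {z : ℍ | dist z UpperHalfPlane.I ≤ dist z (A • UpperHalfPlane.I)} := by
  intro z hz
  simp only [Metric.mem_ball, Set.mem_setOf_eq] at hz ⊢
  set D := dist UpperHalfPlane.I (A • UpperHalfPlane.I) with hD
  have hD0 : 0 < D := dist_pos.mpr (Ne.symm hA)
  have htr : Matrix.trace (A.1.transpose * A.1) =
      A 0 0 ^ 2 + A 0 1 ^ 2 + A 1 0 ^ 2 + A 1 1 ^ 2 := by
    simp [Matrix.trace_fin_two, Matrix.mul_apply, Matrix.transpose_apply, Fin.sum_univ_two]
    ring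
  have ha2 : frobNorm A.1 ^ 2 = 2 * Real.cosh D := by
    rw [frobNorm, Real.sq_sqrt (by rw [htr]; positivity), htr, hD, cosh_dist_I_smul]
    ring
  have hnu : nu (frobNorm A.1) = Real.exp (D / 2) := by
    have h4 : frobNorm A.1 ^ 4 - 4 = (2 * Real.sinh D) ^ 2 := by
      have h := Real.cosh_sq_sub_sinh_sq D
      nlinarith [ha2]
    have hsinh : 0 ≤ 2 * Real.sinh D := by positivity
    rw [nu, ha2, h4, Real.sqrt_sq hsinh]
    have hexp : (2 * Real.cosh D + 2 * Real.sinh D) / 2 = Real.exp (D / 2) ^ 2 := by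
      rw [sq, ← Real.exp_add]
      have : D / 2 + D / 2 = D := by ring
      rw [this, ← Real.cosh_add_sinh]
      ring
    rw [hexp, Real.sqrt_sq (Real.exp_pos _).le]
  rw [hnu, Real.log_exp] at hz
  have htri := dist_triangle UpperHalfPlane.I z (A • UpperHalfPlane.I)
  rw [dist_comm UpperHalfPlane.I z] at htri
  linarith
end
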